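/- arXiv:1809.06331 — 5 statements merged into one kernel-verified Lean document; each statement's English description precedes it below -/
import Mathlib

section
/- Let B be the signed incidence matrix of a tree on n nodes with m = n − 1 edges, let ω₁, …, ωₙ be strictly positive reals with Ω = diag(ω₁, …, ωₙ), and for each node i let dᵢ = #{edges k : B i k ≠ 0} denote its degree. Then the smallest eigenvalue of Bᵀ Ω B satisfies λ₁(Bᵀ Ω B) ≥ min over edges k of ((2 − d_{i_k}) ω_{i_k} + (2 − d_{j_k}) ω_{j_k}), where i_k and j_k are the two endpoints of edge k. -/
open Matrix

/-- Geršgorin-type lower bound for the smallest eigenvalue of the weighted edge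
Laplacian `Bᵀ Ω B` of a tree:
`λ₁(Bᵀ Ω B) ≥ min over edges k of ((2 − d_{i_k}) ω_{i_k} + (2 − d_{j_k}) ω_{j_k})`,
where `d_i` is the degree of node `i` (the number of edges incident to it). -/
theorem smallest_eigenvalue_degree_lower_bound
    {n m : ℕ} (hmn : m = n - 1) (hm : 0 < m)
    (B : Matrix (Fin n) (Fin m) ℝ)
    (e₁ e₂ : Fin m → Fin n)
    (hne : ∀ k, e₁ k ≠ e₂ k)
    (hB1 : ∀ k, B (e₁ k) k = 1)
    (hB2 : ∀ k, B (e₂ k) k = -1)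
    (hB0 : ∀ k, ∀ l, l ≠ e₁ k → l ≠ e₂ k → B l k = 0)
    (hInv : IsUnit (B.transpose * B))
    (ω : Fin n → ℝ) (hω : ∀ i, 0 < ω i)
    (hA : (B.transpose * Matrix.diagonal ω * B).IsHermitian)
    (d : Fin n → ℕ) (hd : ∀ i, d i = Nat.card {k : Fin m // B i k ≠ 0}) :
    (⨅ k : Fin m,
        ((2 - (d (e₁ k) : ℝ)) * ω (e₁ k) + (2 - (d (e₂ k) : ℝ)) * ω (e₂ k)))
      ≤ ⨅ k, hA.eigenvalues k := by
  haveI : NeZero m := ⟨hm.ne'⟩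
  have hentry : ∀ k l, (B.transpose * Matrix.diagonal ω * B) k l
      = B (e₁ k) l * ω (e₁ k) - B (e₂ k) l * ω (e₂ k) := by
    intro k l
    rw [Matrix.mul_apply]
    simp only [Matrix.mul_diagonal, Matrix.transpose_apply]
    rw [show (Finset.univ : Finset (Fin n)) = insert (e₁ k) {e₂ k} ∪ (Finset.univ \ insert (e₁ k) {e₂ k}) by
      simp [Finset.union_sdiff_of_subset]]
    rw [Finset.sum_union (Finset.disjoint_sdiff), Finset.sum_insert (by simp [hne k]),
      Finset.sum_singleton]
    rw [hB1 k, hB2 k, Finset.sum_eq_zero]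
    · ring
    · intro i hi
      simp only [Finset.mem_sdiff, Finset.mem_insert, Finset.mem_singleton, not_or] at hi
      rw [hB0 k i hi.2.1 hi.2.2]; ring
  -- entries of B are bounded by indicator
  have hBabs : ∀ i l, |B i l| ≤ (if B i l ≠ 0 then (1:ℝ) else 0) := by
    intro i l
    by_cases h1 : i = e₁ l
    · subst h1; simp [hB1 l]
    by_cases h2 : i = e₂ l
    · subst h2; simp [hB2 l]
    · simp [hB0 l i h1 h2]
  -- degree as a sum of indicators
  have hdsum : ∀ i, ∑ l : Fin m, (if B i l ≠ 0 then (1:ℝ) else 0) = d i := by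
    intro i
    rw [hd i, Nat.card_eq_fintype_card, Fintype.card_subtype, Finset.sum_boole]
  -- main Gershgorin estimate per eigenvalue
  have key : ∀ j : Fin m, ∃ k : Fin m,
      (2 - (d (e₁ k) : ℝ)) * ω (e₁ k) + (2 - (d (e₂ k) : ℝ)) * ω (e₂ k)
        ≤ hA.eigenvalues j := by
    intro j
    have hev : Module.End.HasEigenvalue
        (Matrix.toLin' (B.transpose * Matrix.diagonal ω * B)) (hA.eigenvalues j) := by
      apply Module.End.hasEigenvalue_of_hasEigenvector (x := (hA.eigenvectorBasis j : Fin m → ℝ))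
      constructor
      · rw [Module.End.mem_eigenspace_iff]
        have h := hA.mulVec_eigenvectorBasis j
        exact h
      · intro h
        have := hA.eigenvectorBasis.orthonormal.1 j
        rw [show (hA.eigenvectorBasis j) = 0 by ext i; exact congrFun h i] at this
        simp at this
    obtain ⟨k, hk⟩ := eigenvalue_mem_ball hev
    refine ⟨k, ?_⟩
    rw [Metric.mem_closedBall, Real.dist_eq, abs_sub_le_iff] at hk
    have hrad : ∑ l ∈ Finset.univ.erase k, ‖(B.transpose * Matrix.diagonal ω * B) k l‖
        ≤ ((d (e₁ k) : ℝ) - 1) * ω (e₁ k) + ((d (e₂ k) : ℝ) - 1) * ω (e₂ k) := by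
      have step : ∀ l ∈ Finset.univ.erase k, ‖(B.transpose * Matrix.diagonal ω * B) k l‖
          ≤ (if B (e₁ k) l ≠ 0 then (1:ℝ) else 0) * ω (e₁ k)
            + (if B (e₂ k) l ≠ 0 then (1:ℝ) else 0) * ω (e₂ k) := by
        intro l _
        rw [hentry k l, Real.norm_eq_abs]
        calc |B (e₁ k) l * ω (e₁ k) - B (e₂ k) l * ω (e₂ k)|
            ≤ |B (e₁ k) l * ω (e₁ k)| + |B (e₂ k) l * ω (e₂ k)| := abs_sub _ _
          _ ≤ _ := by
              rw [abs_mul, abs_mul, abs_of_pos (hω _), abs_of_pos (hω _)]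
              exact add_le_add
                (mul_le_mul_of_nonneg_right (hBabs _ _) (hω _).le)
                (mul_le_mul_of_nonneg_right (hBabs _ _) (hω _).le)
      calc ∑ l ∈ Finset.univ.erase k, ‖(B.transpose * Matrix.diagonal ω * B) k l‖
          ≤ ∑ l ∈ Finset.univ.erase k,
              ((if B (e₁ k) l ≠ 0 then (1:ℝ) else 0) * ω (e₁ k)
               + (if B (e₂ k) l ≠ 0 then (1:ℝ) else 0) * ω (e₂ k)) :=
            Finset.sum_le_sum step
        _ = ((d (e₁ k) : ℝ) - 1) * ω (e₁ k) + ((d (e₂ k) : ℝ) - 1) * ω (e₂ k) := by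
            rw [Finset.sum_add_distrib, ← Finset.sum_mul, ← Finset.sum_mul]
            have h1 : ∑ l ∈ Finset.univ.erase k, (if B (e₁ k) l ≠ 0 then (1:ℝ) else 0)
                = (d (e₁ k) : ℝ) - 1 := by
              rw [Finset.sum_erase_eq_sub (Finset.mem_univ k), hdsum]
              simp [hB1 k]
            have h2 : ∑ l ∈ Finset.univ.erase k, (if B (e₂ k) l ≠ 0 then (1:ℝ) else 0)
                = (d (e₂ k) : ℝ) - 1 := by
              rw [Finset.sum_erase_eq_sub (Finset.mem_univ k), hdsum]
              simp [hB2 k]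
            rw [h1, h2]
    have hdiag : (B.transpose * Matrix.diagonal ω * B) k k = ω (e₁ k) + ω (e₂ k) := by
      rw [hentry k k, hB1 k, hB2 k]; ring
    linarith [hk.2, hrad]
  -- conclude
  apply le_ciInf
  intro j
  obtain ⟨k, hk⟩ := key j
  exact le_trans (ciInf_le (Finite.bddBelow_range _) k) hk
end

section
/- Let B be the signed incidence matrix of a tree on n nodes with m = n − 1 edges, let ω₁, …, ωₙ be strictly positive reals with Ω = diag(ω₁, …, ωₙ), let κ > 0, and let λ₁ denote the smallest eigenvalue of Bᵀ Ω B. Let Δ = max over edges k of |ω_{i_k} − ω_{j_k}|. Suppose θ : ℝ → (Fin n → ℝ) is a solution of the frequency-weighted Kuramoto dynamics θ̇ᵢ = ωᵢ (1 − κ ∑_k B i k sin((Bᵀθ)_k)). Then the Lyapunov function V(t) = 2 ∑_k sin²((Bᵀθ(t))_k / 2) is differentiable and satisfies, for every t, V'(t) ≤ Δ ∑_k |sin((Bᵀθ(t))_k)| − κ λ₁ ∑_k sin²((Bᵀθ(t))_k). -/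
open Matrix

lemma rayleigh_lower {m : ℕ} {A : Matrix (Fin m) (Fin m) ℝ} (hA : A.IsHermitian)
    {c : ℝ} (hc : ∀ i, c ≤ hA.eigenvalues i) (x : Fin m → ℝ) :
    c * (x ⬝ᵥ x) ≤ x ⬝ᵥ A *ᵥ x := by
  set U : Matrix (Fin m) (Fin m) ℝ := (hA.eigenvectorUnitary : Matrix (Fin m) (Fin m) ℝ) with hUdef
  have hU : U * star U = 1 := mem_unitaryGroup_iff.mp hA.eigenvectorUnitary.2
  have hd : Matrix.diagonal (fun i => hA.eigenvalues i - c)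
      = Matrix.diagonal hA.eigenvalues - c • (1 : Matrix (Fin m) (Fin m) ℝ) := by
    rw [smul_one_eq_diagonal, ← Matrix.diagonal_sub]
  have h1 : U * Matrix.diagonal (fun i => hA.eigenvalues i - c) * star U
      = A - c • 1 := by
    rw [hd, Matrix.mul_sub, Matrix.sub_mul]
    congr 1
    · have he : (RCLike.ofReal ∘ hA.eigenvalues : Fin m → ℝ) = hA.eigenvalues := by
        ext i; simp [RCLike.ofReal_real_eq_id]
      conv_rhs => rw [hA.spectral_theorem, he]
      rw [Unitary.conjStarAlgAut_apply]
    · rw [Matrix.mul_smul, Matrix.mul_one, Matrix.smul_mul, hU]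
  have hps : (A - c • (1 : Matrix (Fin m) (Fin m) ℝ)).PosSemidef := by
    rw [← h1]
    have hdps : (Matrix.diagonal (fun i => hA.eigenvalues i - c)).PosSemidef :=
      posSemidef_diagonal_iff.mpr (fun i => sub_nonneg.2 (hc i))
    have := hdps.mul_mul_conjTranspose_same U
    exact this
  have h2 := hps.dotProduct_mulVec_nonneg x
  have h3 : star x ⬝ᵥ (A - c • (1 : Matrix (Fin m) (Fin m) ℝ)) *ᵥ x
      = x ⬝ᵥ A *ᵥ x - c * (x ⬝ᵥ x) := by
    rw [Matrix.sub_mulVec]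
    simp [Matrix.smul_mulVec, Matrix.one_mulVec, dotProduct_sub, dotProduct_smul,
      smul_eq_mul]
  rw [h3] at h2
  linarith

/-- Along solutions of the frequency-weighted Kuramoto dynamics on a tree, the
Lyapunov function `V(t) = 2 ∑_k sin²((Bᵀθ(t))_k / 2)` is differentiable and
its derivative satisfies
`V'(t) ≤ Δ ∑_k |sin((Bᵀθ(t))_k)| − κ λ₁ ∑_k sin²((Bᵀθ(t))_k)`,
where `Δ = max_k |ω_{i_k} − ω_{j_k}|` and `λ₁` is the smallest eigenvalue of
`Bᵀ Ω B`. -/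
theorem lyapunov_derivative_bound
    {n m : ℕ} (hmn : m = n - 1) (hm : 0 < m)
    (B : Matrix (Fin n) (Fin m) ℝ)
    (e₁ e₂ : Fin m → Fin n)
    (hne : ∀ k, e₁ k ≠ e₂ k)
    (hB1 : ∀ k, B (e₁ k) k = 1)
    (hB2 : ∀ k, B (e₂ k) k = -1)
    (hB0 : ∀ k, ∀ l, l ≠ e₁ k → l ≠ e₂ k → B l k = 0)
    (hInv : IsUnit (B.transpose * B))
    (ω : Fin n → ℝ) (hω : ∀ i, 0 < ω i)
    (hA : (B.transpose * Matrix.diagonal ω * B).IsHermitian)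
    (lam1 : ℝ) (hlam1 : lam1 = ⨅ k, hA.eigenvalues k)
    (Δ : ℝ) (hΔ : Δ = ⨆ k : Fin m, |ω (e₁ k) - ω (e₂ k)|)
    (κ : ℝ) (hκ : 0 < κ)
    (θ : ℝ → Fin n → ℝ)
    (hdyn : ∀ t i, HasDerivAt (fun s => θ s i)
      (ω i * (1 - κ * ∑ k, B i k * Real.sin (B.transpose.mulVec (θ t) k))) t) :
    ∀ t, ∃ v,
      HasDerivAt (fun s => 2 * ∑ k, Real.sin (B.transpose.mulVec (θ s) k / 2) ^ 2) v t ∧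
      v ≤ Δ * (∑ k, |Real.sin (B.transpose.mulVec (θ t) k)|)
            - κ * lam1 * ∑ k, Real.sin (B.transpose.mulVec (θ t) k) ^ 2 := by
  intro t
  haveI : Nonempty (Fin m) := ⟨⟨0, hm⟩⟩
  set y : Fin m → ℝ := B.transpose.mulVec (θ t) with hy
  set sv : Fin m → ℝ := fun k => Real.sin (y k) with hsv
  set D : Fin n → ℝ := fun i => ω i * (1 - κ * ∑ l, B i l * Real.sin (y l)) with hD
  set d : Fin m → ℝ := fun k => ∑ i, B.transpose k i * D i with hd
  -- derivative of the k-th edge angle difference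
  have hyd : ∀ k, HasDerivAt (fun s => B.transpose.mulVec (θ s) k) (d k) t := by
    intro k
    have : ∀ s, B.transpose.mulVec (θ s) k = ∑ i, B.transpose k i * θ s i := by
      intro s; rfl
    simp only [this]
    exact HasDerivAt.fun_sum (fun i _ => (hdyn t i).const_mul (B.transpose k i))
  have hderiv : HasDerivAt
      (fun s => 2 * ∑ k, Real.sin (B.transpose.mulVec (θ s) k / 2) ^ 2)
      (2 * ∑ k, ((2:ℕ) * Real.sin (y k / 2) ^ (2-1) *
        (Real.cos (y k / 2) * (d k / 2)))) t := by
    refine HasDerivAt.const_mul 2 (HasDerivAt.fun_sum fun k _ => ?_)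
    exact (((hyd k).div_const 2).sin).pow 2
  refine ⟨_, hderiv, ?_⟩
  have hsin2 : ∀ a : ℝ, Real.sin a = 2 * Real.sin (a/2) * Real.cos (a/2) := by
    intro a
    have := Real.sin_two_mul (a/2)
    rwa [show 2*(a/2) = a by ring] at this
  have hveq : (2 * ∑ k, ((2:ℕ) * Real.sin (y k / 2) ^ (2-1) *
        (Real.cos (y k / 2) * (d k / 2)))) = ∑ k, sv k * d k := by
    rw [Finset.mul_sum]
    refine Finset.sum_congr rfl fun k _ => ?_
    simp only [hsv]
    rw [hsin2 (y k)]; push_cast; ring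
  rw [hveq]
  -- compute d k
  set A : Matrix (Fin m) (Fin m) ℝ := B.transpose * Matrix.diagonal ω * B with hAdef
  set g : Fin m → ℝ := fun k => ω (e₁ k) - ω (e₂ k) with hg
  have hdk : ∀ k, d k = g k - κ * (A *ᵥ sv) k := by
    intro k
    have h1 : ∀ i : Fin n, B.transpose k i * D i
        = B.transpose k i * ω i - κ * (B.transpose k i * (ω i * (B *ᵥ sv) i)) := by
      intro i
      have : (B *ᵥ sv) i = ∑ l, B i l * Real.sin (y l) := rfl
      rw [hD, this]; ring
    have hsum1 : (∑ i, B.transpose k i * ω i) = g k := by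
      have : ∀ i : Fin n, B.transpose k i * ω i
          = (if i = e₁ k then ω (e₁ k) else 0) - (if i = e₂ k then ω (e₂ k) else 0) := by
        intro i
        by_cases h1' : i = e₁ k
        · subst h1'
          simp [Matrix.transpose_apply, hB1 k, hne k]
        · by_cases h2' : i = e₂ k
          · subst h2'
            have hne' : e₂ k ≠ e₁ k := (hne k).symm
            simp [Matrix.transpose_apply, hB2 k, hne', h1']
          · simp [Matrix.transpose_apply, hB0 k i h1' h2', h1', h2']
      rw [Finset.sum_congr rfl fun i _ => this i, Finset.sum_sub_distrib]
      simp [hg]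
    have hsum2 : (∑ i, B.transpose k i * (ω i * (B *ᵥ sv) i)) = (A *ᵥ sv) k := by
      rw [hAdef, ← Matrix.mulVec_mulVec, ← Matrix.mulVec_mulVec]
      have : (Matrix.diagonal ω *ᵥ (B *ᵥ sv)) = fun i => ω i * (B *ᵥ sv) i := by
        ext i; rw [Matrix.mulVec_diagonal]
      rw [this]
      rfl
    simp only [hd]
    rw [Finset.sum_congr rfl fun i _ => h1 i, Finset.sum_sub_distrib, ← Finset.mul_sum,
      hsum1, hsum2]
  have hrewrite : (∑ k, sv k * d k)
      = (∑ k, sv k * g k) - κ * (sv ⬝ᵥ A *ᵥ sv) := by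
    rw [Finset.sum_congr rfl fun k _ => by rw [hdk k]]
    rw [show (∑ k, sv k * (g k - κ * (A *ᵥ sv) k))
        = (∑ k, sv k * g k) - ∑ k, κ * (sv k * (A *ᵥ sv) k) by
      rw [← Finset.sum_sub_distrib]; exact Finset.sum_congr rfl fun k _ => by ring]
    rw [← Finset.mul_sum]
    rfl
  rw [hrewrite]
  -- bound the two pieces
  have hΔk : ∀ k, |g k| ≤ Δ := by
    intro k
    simp only [hg, hΔ]
    exact le_ciSup (f := fun k => |ω (e₁ k) - ω (e₂ k)|) (Set.Finite.bddAbove (Set.finite_range _)) k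
  have hb1 : (∑ k, sv k * g k) ≤ Δ * ∑ k, |sv k| := by
    rw [Finset.mul_sum]
    refine Finset.sum_le_sum fun k _ => ?_
    calc sv k * g k ≤ |sv k * g k| := le_abs_self _
      _ = |sv k| * |g k| := abs_mul _ _
      _ ≤ |sv k| * Δ := mul_le_mul_of_nonneg_left (hΔk k) (abs_nonneg _)
      _ = Δ * |sv k| := mul_comm _ _
  have hc : ∀ i, lam1 ≤ hA.eigenvalues i := by
    intro i
    rw [hlam1]
    exact ciInf_le (Set.Finite.bddBelow (Set.finite_range _)) i
  have hb2 : lam1 * (sv ⬝ᵥ sv) ≤ sv ⬝ᵥ A *ᵥ sv := rayleigh_lower hA hc sv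
  have hss : (sv ⬝ᵥ sv) = ∑ k, Real.sin (y k) ^ 2 := by
    simp [dotProduct, hsv, pow_two]
  have hb2' : -(κ * (sv ⬝ᵥ A *ᵥ sv)) ≤ -(κ * lam1 * ∑ k, Real.sin (y k) ^ 2) := by
    rw [← hss]
    nlinarith [mul_le_mul_of_nonneg_left hb2 hκ.le]
  have : (∑ k, |sv k|) = ∑ k, |Real.sin (y k)| := rfl
  rw [this] at hb1
  linarith
end

section
/- (Lyapunov decrease for the relative-frequency system.) Let A be a real symmetric positive definite m × m matrix, κ > 0, ε ∈ (0, π/2), and let w : ℝ → (Fin m → ℝ) satisfy sin ε ≤ w(t)_k ≤ 1 for all t and k. Suppose z : ℝ → (Fin m → ℝ) is differentiable in each coordinate and satisfies z'(t) = −κ A · diag(w(t)) · z(t) for all t. Then the function V(t) = z(t)ᵀ A⁻¹ z(t) is differentiable and satisfies V'(t) ≤ −κ sin ε · ‖z(t)‖² for all t, where ‖z(t)‖² = ∑_k z(t)_k². -/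
open Matrix

/-- Lyapunov decrease for the relative-frequency system: if
`z' = −κ A diag(w) z` with `A` symmetric positive definite and
`sin ε ≤ w(t)_k ≤ 1`, then `V(t) = z(t)ᵀ A⁻¹ z(t)` is differentiable with
`V'(t) ≤ −κ sin ε · ‖z(t)‖²`. -/
theorem lyapunov_decrease_relative_frequency
    {m : ℕ} (A : Matrix (Fin m) (Fin m) ℝ) (hA : A.PosDef)
    (κ ε : ℝ) (hκ : 0 < κ) (hε : 0 < ε) (hε2 : ε < Real.pi / 2)
    (w : ℝ → Fin m → ℝ) (hw : ∀ t k, Real.sin ε ≤ w t k ∧ w t k ≤ 1)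
    (z zd : ℝ → Fin m → ℝ)
    (hz : ∀ t k, HasDerivAt (fun s => z s k) (zd t k) t)
    (hdyn : ∀ t, zd t = -κ • (A * Matrix.diagonal (w t)).mulVec (z t)) :
    ∀ t, ∃ v,
      HasDerivAt (fun s => z s ⬝ᵥ A⁻¹.mulVec (z s)) v t ∧
      v ≤ -(κ * Real.sin ε) * ∑ k, z t k ^ 2 := by
  intro t
  have hdet : IsUnit A.det := hA.det_pos.ne'.isUnit
  have hAinv : A⁻¹ * A = 1 := Matrix.nonsing_inv_mul A hdet
  have hAinv' : A * A⁻¹ = 1 := Matrix.mul_nonsing_inv A hdet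
  have hsym : Aᵀ = A := by
    have := hA.1.eq
    simpa [Matrix.conjTranspose_eq_transpose_of_trivial] using this
  set D := Matrix.diagonal (w t) with hDdef
  refine ⟨zd t ⬝ᵥ A⁻¹.mulVec (z t) + z t ⬝ᵥ A⁻¹.mulVec (zd t), ?_, ?_⟩
  · have h1 : HasDerivAt (fun s => ∑ i, ∑ j, z s i * (A⁻¹ i j * z s j))
        (∑ i, ∑ j, (zd t i * (A⁻¹ i j * z t j) + z t i * (A⁻¹ i j * zd t j))) t := by
      apply HasDerivAt.fun_sum
      intro i _
      apply HasDerivAt.fun_sum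
      intro j _
      exact (hz t i).mul ((hz t j).const_mul _)
    have hfun : (fun s => z s ⬝ᵥ A⁻¹.mulVec (z s))
        = fun s => ∑ i, ∑ j, z s i * (A⁻¹ i j * z s j) := by
      funext s
      simp [Matrix.mulVec, dotProduct, Finset.mul_sum]
    have hval : zd t ⬝ᵥ A⁻¹.mulVec (z t) + z t ⬝ᵥ A⁻¹.mulVec (zd t)
        = ∑ i, ∑ j, (zd t i * (A⁻¹ i j * z t j) + z t i * (A⁻¹ i j * zd t j)) := by
      simp [Matrix.mulVec, dotProduct, Finset.mul_sum, Finset.sum_add_distrib]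
    rw [hfun, hval]
    exact h1
  · -- compute the value
    have hterm2 : z t ⬝ᵥ A⁻¹.mulVec (zd t) = -κ * ∑ i, w t i * z t i ^ 2 := by
      rw [hdyn t]
      rw [Matrix.mulVec_smul, Matrix.mulVec_mulVec]
      rw [show A⁻¹ * (A * D) = D by rw [← Matrix.mul_assoc, hAinv, Matrix.one_mul]]
      simp [hDdef, dotProduct, Matrix.mulVec_diagonal, Finset.mul_sum]
      ring_nf
      congr 1
      funext i
      ring
    have hterm1 : zd t ⬝ᵥ A⁻¹.mulVec (z t) = -κ * ∑ i, w t i * z t i ^ 2 := by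
      rw [hdyn t]
      have : (A * D) *ᵥ z t = z t ᵥ* (A * D)ᵀ := by
        rw [← Matrix.mulVec_transpose, Matrix.transpose_transpose]
      rw [smul_dotProduct, this, Matrix.transpose_mul, hsym,
        Matrix.diagonal_transpose]
      rw [← dotProduct_mulVec, Matrix.mulVec_mulVec, ← hDdef]
      rw [show D * A * A⁻¹ = D by rw [Matrix.mul_assoc, hAinv', Matrix.mul_one]]
      simp [hDdef, dotProduct, Matrix.mulVec_diagonal, Finset.mul_sum]
      ring_nf
      congr 1
      funext i
      ring
    rw [hterm1, hterm2]
    have hsin : 0 < Real.sin ε :=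
      Real.sin_pos_of_pos_of_lt_pi hε (lt_trans hε2 (by linarith [Real.pi_pos]))
    have hS : Real.sin ε * ∑ k, z t k ^ 2 ≤ ∑ i, w t i * z t i ^ 2 := by
      rw [Finset.mul_sum]
      apply Finset.sum_le_sum
      intro i _
      exact mul_le_mul_of_nonneg_right (hw t i).1 (sq_nonneg _)
    have hT : 0 ≤ ∑ k, z t k ^ 2 := Finset.sum_nonneg fun k _ => sq_nonneg _
    nlinarith [mul_le_mul_of_nonneg_left hS (le_of_lt hκ),
      mul_nonneg (mul_nonneg hκ.le hsin.le) hT]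
end

section
/- (Exponential decay of the Lyapunov function.) Let A be a real symmetric positive definite m × m matrix with smallest eigenvalue λ₁(A) > 0, κ > 0, ε ∈ (0, π/2), and let w : ℝ → (Fin m → ℝ) satisfy sin ε ≤ w(t)_k ≤ 1 for all t and k. Suppose z : ℝ → (Fin m → ℝ) is differentiable in each coordinate and satisfies z'(t) = −κ A · diag(w(t)) · z(t) for all t. Then for all t ≥ 0, z(t)ᵀ A⁻¹ z(t) ≤ (z(0)ᵀ A⁻¹ z(0)) · exp(−κ sin ε · λ₁(A) · t). -/
open Matrix

private lemma dot_symm_aux {m : ℕ} (M : Matrix (Fin m) (Fin m) ℝ) (hM : Mᵀ = M)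
    (u v : Fin m → ℝ) : u ⬝ᵥ M.mulVec v = v ⬝ᵥ M.mulVec u := by
  simp only [dotProduct, mulVec, Finset.mul_sum]
  rw [Finset.sum_comm]
  refine Finset.sum_congr rfl fun j _ => Finset.sum_congr rfl fun i _ => ?_
  have h : M j i = M i j := by conv_lhs => rw [← hM, transpose_apply]
  rw [h]; ring

private lemma quad_bound_aux {m : ℕ} (A : Matrix (Fin m) (Fin m) ℝ) (hA : A.PosDef)
    (lam1 : ℝ) (hle : ∀ i, lam1 ≤ hA.1.eigenvalues i) (x : Fin m → ℝ) :
    lam1 * (x ⬝ᵥ A⁻¹.mulVec x) ≤ x ⬝ᵥ x := by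
  set U : Matrix (Fin m) (Fin m) ℝ := (hA.1.eigenvectorUnitary : Matrix (Fin m) (Fin m) ℝ) with hU
  set d := hA.1.eigenvalues with hd
  have hdpos : ∀ i, 0 < d i := hA.eigenvalues_pos
  have hUU : U * star U = 1 := (Matrix.mem_unitaryGroup_iff).mp (hA.1.eigenvectorUnitary).2
  have hUU' : star U * U = 1 := (Matrix.mem_unitaryGroup_iff').mp (hA.1.eigenvectorUnitary).2
  have hspec : A = U * diagonal d * star U := by
    have := hA.1.spectral_theorem
    convert this using 2
    rw [Unitary.conjStarAlgAut_apply]; rfl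
  have hAinv : A⁻¹ = U * diagonal (fun i => (d i)⁻¹) * star U := by
    apply inv_eq_right_inv
    rw [hspec]
    have hDD : diagonal d * diagonal (fun i => (d i)⁻¹) = 1 := by
      rw [diagonal_mul_diagonal]
      convert diagonal_one using 2
      funext i
      exact mul_inv_cancel₀ (hdpos i).ne'
    calc U * diagonal d * star U * (U * diagonal (fun i => (d i)⁻¹) * star U)
        = U * diagonal d * (star U * U) * diagonal (fun i => (d i)⁻¹) * star U := by
          simp only [Matrix.mul_assoc]
      _ = U * (diagonal d * diagonal (fun i => (d i)⁻¹)) * star U := by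
          rw [hUU']; simp only [Matrix.mul_one, Matrix.mul_assoc]
      _ = 1 := by rw [hDD, Matrix.mul_one, hUU]
  have hB : (1 : Matrix (Fin m) (Fin m) ℝ) - lam1 • A⁻¹
      = U * diagonal (fun i => 1 - lam1 * (d i)⁻¹) * star U := by
    rw [hAinv]
    have h1 : (1 : Matrix (Fin m) (Fin m) ℝ) = U * diagonal (fun _ => (1:ℝ)) * star U := by
      rw [diagonal_one, Matrix.mul_one, hUU]
    rw [h1]
    rw [← Matrix.smul_mul, ← Matrix.mul_smul, ← Matrix.sub_mul, ← Matrix.mul_sub]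
    congr 2
    ext i j
    by_cases hij : i = j <;> simp [hij, diagonal, Matrix.sub_apply]
  have hBpsd : ((1 : Matrix (Fin m) (Fin m) ℝ) - lam1 • A⁻¹).PosSemidef := by
    rw [hB]
    refine PosSemidef.mul_mul_conjTranspose_same ?_ U
    refine posSemidef_diagonal_iff.mpr fun i => ?_
    have h2 : lam1 * (d i)⁻¹ ≤ d i * (d i)⁻¹ :=
      mul_le_mul_of_nonneg_right (hle i) (inv_nonneg.mpr (hdpos i).le)
    rw [mul_inv_cancel₀ (hdpos i).ne'] at h2
    linarith
  have h0 := hBpsd.re_dotProduct_nonneg x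
  simp only [RCLike.re_to_real, star_trivial] at h0
  rw [Matrix.sub_mulVec, Matrix.one_mulVec, dotProduct_sub, Matrix.smul_mulVec,
    dotProduct_smul, smul_eq_mul] at h0
  linarith

/-- Exponential decay of the Lyapunov function: if `z' = −κ A diag(w) z` with
`A` symmetric positive definite (smallest eigenvalue `λ₁(A) > 0`) and
`sin ε ≤ w(t)_k ≤ 1`, then for all `t ≥ 0`,
`z(t)ᵀ A⁻¹ z(t) ≤ (z(0)ᵀ A⁻¹ z(0)) · exp(−κ sin ε λ₁(A) t)`. -/
theorem lyapunov_exponential_decay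
    {m : ℕ} (A : Matrix (Fin m) (Fin m) ℝ) (hA : A.PosDef)
    (lam1 : ℝ) (hlam1 : lam1 = ⨅ k, hA.1.eigenvalues k) (hlam1pos : 0 < lam1)
    (κ ε : ℝ) (hκ : 0 < κ) (hε : 0 < ε) (hε2 : ε < Real.pi / 2)
    (w : ℝ → Fin m → ℝ) (hw : ∀ t k, Real.sin ε ≤ w t k ∧ w t k ≤ 1)
    (z zd : ℝ → Fin m → ℝ)
    (hz : ∀ t k, HasDerivAt (fun s => z s k) (zd t k) t)
    (hdyn : ∀ t, zd t = -κ • (A * Matrix.diagonal (w t)).mulVec (z t)) :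
    ∀ t, 0 ≤ t →
      z t ⬝ᵥ A⁻¹.mulVec (z t)
        ≤ (z 0 ⬝ᵥ A⁻¹.mulVec (z 0)) * Real.exp (-(κ * Real.sin ε * lam1) * t) := by
  have hsin : 0 < Real.sin ε :=
    Real.sin_pos_of_pos_of_lt_pi hε (lt_trans hε2 (by linarith [Real.pi_pos]))
  set c : ℝ := κ * Real.sin ε * lam1 with hc
  have hcpos : 0 < c := by positivity
  have hdet : IsUnit A.det := isUnit_iff_ne_zero.mpr hA.det_pos.ne'
  have hAinvsymm : A⁻¹ᵀ = A⁻¹ := by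
    have h := hA.inv.isHermitian
    exact (conjTranspose_eq_transpose_of_trivial _).symm.trans h
  have hle : ∀ i, lam1 ≤ hA.1.eigenvalues i := by
    intro i
    rw [hlam1]
    exact ciInf_le (Finite.bddBelow_range _) i
  set V : ℝ → ℝ := fun t => z t ⬝ᵥ A⁻¹.mulVec (z t) with hV
  have hVnonneg : ∀ t, 0 ≤ V t := by
    intro t
    have := hA.inv.posSemidef.re_dotProduct_nonneg (z t)
    simpa using this
  -- derivative of V
  have hVd : ∀ t, HasDerivAt V (-(2 * κ) * (z t ⬝ᵥ (Matrix.diagonal (w t)).mulVec (z t))) t := by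
    intro t
    have hsum : HasDerivAt (fun s => ∑ i, ∑ j, z s i * A⁻¹ i j * z s j)
        (∑ i, ∑ j, (zd t i * A⁻¹ i j * z t j + z t i * A⁻¹ i j * zd t j)) t := by
      refine HasDerivAt.fun_sum fun i _ => HasDerivAt.fun_sum fun j _ => ?_
      exact ((hz t i).mul_const (A⁻¹ i j)).mul (hz t j)
    have hfun : V = fun s => ∑ i, ∑ j, z s i * A⁻¹ i j * z s j := by
      funext s
      simp [hV, dotProduct, mulVec, Finset.mul_sum, mul_assoc]
    have hval : (∑ i, ∑ j, (zd t i * A⁻¹ i j * z t j + z t i * A⁻¹ i j * zd t j))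
        = zd t ⬝ᵥ A⁻¹.mulVec (z t) + z t ⬝ᵥ A⁻¹.mulVec (zd t) := by
      simp [dotProduct, mulVec, Finset.mul_sum, Finset.sum_add_distrib, mul_assoc]
    rw [hfun]
    rw [hval] at hsum
    convert hsum using 1
    -- now show -(2κ) zᵀ D z = zdᵀ A⁻¹ z + zᵀ A⁻¹ zd
    have hsymm : zd t ⬝ᵥ A⁻¹.mulVec (z t) = z t ⬝ᵥ A⁻¹.mulVec (zd t) :=
      dot_symm_aux A⁻¹ hAinvsymm (zd t) (z t)
    have hterm : z t ⬝ᵥ A⁻¹.mulVec (zd t)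
        = -κ * (z t ⬝ᵥ (Matrix.diagonal (w t)).mulVec (z t)) := by
      rw [hdyn t]
      rw [Matrix.mulVec_smul, dotProduct_smul]
      rw [Matrix.mulVec_mulVec, ← Matrix.mul_assoc, Matrix.nonsing_inv_mul A hdet,
        Matrix.one_mul]
      simp [smul_eq_mul]
    rw [hsymm, hterm]
    ring
  -- bound on derivative
  have hbound : ∀ t, -(2 * κ) * (z t ⬝ᵥ (Matrix.diagonal (w t)).mulVec (z t)) ≤ -c * V t := by
    intro t
    have hS : z t ⬝ᵥ (Matrix.diagonal (w t)).mulVec (z t) = ∑ k, w t k * (z t k) ^ 2 := by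
      simp only [dotProduct, Matrix.mulVec_diagonal, pow_two]
      exact Finset.sum_congr rfl fun k _ => by ring
    have h1 : Real.sin ε * ∑ k, (z t k) ^ 2 ≤ ∑ k, w t k * (z t k) ^ 2 := by
      rw [Finset.mul_sum]
      refine Finset.sum_le_sum fun k _ => ?_
      exact mul_le_mul_of_nonneg_right (hw t k).1 (sq_nonneg _)
    have h2 : lam1 * V t ≤ ∑ k, (z t k) ^ 2 := by
      have := quad_bound_aux A hA lam1 hle (z t)
      simpa [hV, dotProduct, pow_two] using this
    have h3 : c * V t ≤ κ * (z t ⬝ᵥ (Matrix.diagonal (w t)).mulVec (z t)) := by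
      rw [hS, hc]
      calc κ * Real.sin ε * lam1 * V t = κ * (Real.sin ε * (lam1 * V t)) := by ring
        _ ≤ κ * (Real.sin ε * ∑ k, (z t k) ^ 2) := by
            refine mul_le_mul_of_nonneg_left ?_ hκ.le
            exact mul_le_mul_of_nonneg_left h2 hsin.le
        _ ≤ κ * ∑ k, w t k * (z t k) ^ 2 := mul_le_mul_of_nonneg_left h1 hκ.le
    have h4 : 0 ≤ κ * (z t ⬝ᵥ (Matrix.diagonal (w t)).mulVec (z t)) :=
      le_trans (mul_nonneg hcpos.le (hVnonneg t)) h3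
    nlinarith [hVnonneg t]
  -- Gronwall via antitone g
  set g : ℝ → ℝ := fun t => V t * Real.exp (c * t) with hg
  have hgd : ∀ t, HasDerivAt g
      (-(2 * κ) * (z t ⬝ᵥ (Matrix.diagonal (w t)).mulVec (z t)) * Real.exp (c * t)
        + V t * (Real.exp (c * t) * c)) t := by
    intro t
    have he : HasDerivAt (fun s => Real.exp (c * s)) (Real.exp (c * t) * c) t := by
      have h1 : HasDerivAt (fun s : ℝ => c * s) c t := by
        simpa using (hasDerivAt_id t).const_mul c
      have := (Real.hasDerivAt_exp (c * t)).comp t h1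
      exact this
    exact (hVd t).mul he
  have hanti : AntitoneOn g (Set.Ici 0) := by
    refine antitoneOn_of_deriv_nonpos (convex_Ici 0) ?_ ?_ ?_
    · exact fun x _ => ((hgd x).continuousAt).continuousWithinAt
    · intro x _
      exact ((hgd x).differentiableAt).differentiableWithinAt
    · intro x _
      rw [(hgd x).deriv]
      have hb := hbound x
      have hexp : 0 < Real.exp (c * x) := Real.exp_pos _
      nlinarith [hb, hexp, hVnonneg x]
  intro t ht
  have := hanti (Set.self_mem_Ici) ht ht
  simp only [hg, mul_zero, Real.exp_zero, mul_one] at this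
  have hkey : V t * Real.exp (c * t) ≤ V 0 := this
  have hrw : -(κ * Real.sin ε * lam1) * t = -(c * t) := by rw [hc]; ring
  show V t ≤ V 0 * Real.exp (-(κ * Real.sin ε * lam1) * t)
  rw [hrw, Real.exp_neg]
  calc V t = V t * Real.exp (c * t) * (Real.exp (c * t))⁻¹ := by
        field_simp
    _ ≤ V 0 * (Real.exp (c * t))⁻¹ := by
        exact mul_le_mul_of_nonneg_right hkey (by positivity)
end

section
/- (Uniform asymptotic stability of the relative-frequency system.) Let A be a real symmetric positive definite m × m matrix, κ > 0, ε ∈ (0, π/2), and let w : ℝ → (Fin m → ℝ) satisfy sin ε ≤ w(t)_k ≤ 1 for all t and k. Suppose z : ℝ → (Fin m → ℝ) is differentiable in each coordinate and satisfies z'(t) = −κ A · diag(w(t)) · z(t) for all t. Then z(t) converges to the zero vector as t → ∞. -/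
open Matrix Filter

private lemma quad_bounds {m : ℕ} (hm : 0 < m) {M : Matrix (Fin m) (Fin m) ℝ}
    (hM : M.PosDef) :
    ∃ a b : ℝ, 0 < a ∧ 0 < b ∧ ∀ x : Fin m → ℝ,
      a * (x ⬝ᵥ x) ≤ x ⬝ᵥ M *ᵥ x ∧ x ⬝ᵥ M *ᵥ x ≤ b * (x ⬝ᵥ x) := by
  have hQc : Continuous fun x : Fin m → ℝ => x ⬝ᵥ M *ᵥ x := by
    have : (fun x : Fin m → ℝ => x ⬝ᵥ M *ᵥ x)
        = fun x => ∑ i, x i * ∑ j, M i j * x j := by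
      funext x; simp [dotProduct, Matrix.mulVec]
    rw [this]
    exact continuous_finset_sum _ fun i _ =>
      (continuous_apply i).mul (continuous_finset_sum _ fun j _ =>
        (continuous_const.mul (continuous_apply j) : Continuous fun x : Fin m → ℝ => M i j * x j))
  have hdc : Continuous fun x : Fin m → ℝ => x ⬝ᵥ x := by
    exact continuous_finset_sum _ fun i _ => (continuous_apply i).mul (continuous_apply i)
  set S : Set (Fin m → ℝ) := {x | x ⬝ᵥ x = 1} with hS
  have hScl : IsClosed S := isClosed_eq hdc continuous_const
  have hSb : Bornology.IsBounded S := by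
    apply Bornology.IsBounded.subset (Metric.isBounded_closedBall (x := (0 : Fin m → ℝ)) (r := 1))
    intro x hx
    simp only [Metric.mem_closedBall, dist_zero_right]
    rw [pi_norm_le_iff_of_nonneg (by norm_num)]
    intro i
    have h1 : x i * x i ≤ x ⬝ᵥ x := by
      apply Finset.single_le_sum (f := fun j => x j * x j)
        (fun j _ => mul_self_nonneg _) (Finset.mem_univ i)
    rw [hx] at h1
    rw [Real.norm_eq_abs]
    nlinarith [abs_nonneg (x i), sq_abs (x i)]
  have hScp : IsCompact S := Metric.isCompact_of_isClosed_isBounded hScl hSb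
  have hSne : S.Nonempty := by
    refine ⟨Pi.single ⟨0, hm⟩ 1, ?_⟩
    simp [hS, dotProduct, Pi.single_apply]
  obtain ⟨x₀, hx₀S, hx₀⟩ := hScp.exists_isMinOn hSne hQc.continuousOn
  obtain ⟨x₁, hx₁S, hx₁⟩ := hScp.exists_isMaxOn hSne hQc.continuousOn
  have hposQ : ∀ x : Fin m → ℝ, x ≠ 0 → 0 < x ⬝ᵥ M *ᵥ x := by
    intro x hx
    have := hM.dotProduct_mulVec_pos hx
    simpa using this
  have hx₀ne : x₀ ≠ 0 := by
    intro h
    have : x₀ ⬝ᵥ x₀ = 1 := hx₀S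
    rw [h] at this; simp at this
  have ha : 0 < x₀ ⬝ᵥ M *ᵥ x₀ := hposQ x₀ hx₀ne
  have hx₁ne : x₁ ≠ 0 := by
    intro h
    have : x₁ ⬝ᵥ x₁ = 1 := hx₁S
    rw [h] at this; simp at this
  have hb : 0 < x₁ ⬝ᵥ M *ᵥ x₁ := hposQ x₁ hx₁ne
  refine ⟨x₀ ⬝ᵥ M *ᵥ x₀, x₁ ⬝ᵥ M *ᵥ x₁, ha, hb, ?_⟩
  intro x
  by_cases hx : x = 0
  · subst hx; simp
  · have hr : 0 < x ⬝ᵥ x := by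
      rcases lt_or_eq_of_le (Finset.sum_nonneg
        (fun i _ => mul_self_nonneg (x i)) : (0:ℝ) ≤ x ⬝ᵥ x) with h | h
      · exact h
      · exact absurd (dotProduct_self_eq_zero.mp h.symm) hx
    set s := Real.sqrt (x ⬝ᵥ x) with hsdef
    have hs : 0 < s := Real.sqrt_pos.mpr hr
    have hss : s * s = x ⬝ᵥ x := Real.mul_self_sqrt hr.le
    set y : Fin m → ℝ := s⁻¹ • x with hy
    have hyS : y ∈ S := by
      show y ⬝ᵥ y = 1
      rw [hy, smul_dotProduct, dotProduct_smul, smul_eq_mul, smul_eq_mul]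
      field_simp
      nlinarith
    have hQy : y ⬝ᵥ M *ᵥ y = (s⁻¹ * s⁻¹) * (x ⬝ᵥ M *ᵥ x) := by
      rw [hy, smul_dotProduct, Matrix.mulVec_smul, dotProduct_smul,
        smul_eq_mul, smul_eq_mul]
      ring
    have h1 : x₀ ⬝ᵥ M *ᵥ x₀ ≤ y ⬝ᵥ M *ᵥ y := hx₀ hyS
    have h2 : y ⬝ᵥ M *ᵥ y ≤ x₁ ⬝ᵥ M *ᵥ x₁ := hx₁ hyS
    rw [hQy] at h1 h2
    have hinv : s⁻¹ * s⁻¹ = (x ⬝ᵥ x)⁻¹ := by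
      field_simp
      nlinarith
    rw [hinv] at h1 h2
    constructor
    · rw [← le_div_iff₀ hr]
      rwa [inv_mul_eq_div] at h1
    · rw [← div_le_iff₀ hr]
      rwa [inv_mul_eq_div] at h2

/-- Uniform asymptotic stability of the relative-frequency system: if
`z' = −κ A diag(w) z` with `A` symmetric positive definite and
`sin ε ≤ w(t)_k ≤ 1`, then `z(t) → 0` as `t → ∞`. -/
theorem relative_frequency_asymptotic_stability
    {m : ℕ} (A : Matrix (Fin m) (Fin m) ℝ) (hA : A.PosDef)
    (κ ε : ℝ) (hκ : 0 < κ) (hε : 0 < ε) (hε2 : ε < Real.pi / 2)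
    (w : ℝ → Fin m → ℝ) (hw : ∀ t k, Real.sin ε ≤ w t k ∧ w t k ≤ 1)
    (z zd : ℝ → Fin m → ℝ)
    (hz : ∀ t k, HasDerivAt (fun s => z s k) (zd t k) t)
    (hdyn : ∀ t, zd t = -κ • (A * Matrix.diagonal (w t)).mulVec (z t)) :
    Filter.Tendsto z Filter.atTop (nhds 0) := by
  rcases Nat.eq_zero_or_pos m with hm | hm
  · subst hm
    have hz0 : z = fun _ => 0 := funext fun t => funext fun k => Fin.elim0 k
    rw [hz0]
    exact tendsto_const_nhds
  -- setup
  have hsin : 0 < Real.sin ε :=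
    Real.sin_pos_of_pos_of_lt_pi hε (by linarith [Real.pi_pos])
  set M : Matrix (Fin m) (Fin m) ℝ := A⁻¹ with hMdef
  have hM : M.PosDef := hA.inv
  have hMA : M * A = 1 := A.nonsing_inv_mul (isUnit_iff_ne_zero.mpr hA.det_pos.ne')
  have hMt : Mᵀ = M := by
    ext i j
    simpa [Matrix.conjTranspose_apply] using congrFun (congrFun hM.1 i) j
  have hsym : ∀ u v : Fin m → ℝ, u ⬝ᵥ M *ᵥ v = v ⬝ᵥ M *ᵥ u := by
    intro u v
    rw [Matrix.dotProduct_mulVec]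
    conv_lhs => rw [← hMt]
    rw [Matrix.vecMul_transpose, dotProduct_comm]
  obtain ⟨a, b, hapos, hbpos, hab⟩ := quad_bounds hm hM
  set V : ℝ → ℝ := fun t => z t ⬝ᵥ M *ᵥ z t with hVdef
  -- derivative of V
  have hmv : ∀ i t, HasDerivAt (fun s => (M *ᵥ z s) i) ((M *ᵥ zd t) i) t := by
    intro i t
    have h : HasDerivAt (fun s => ∑ j, M i j * z s j) (∑ j, M i j * zd t j) t :=
      HasDerivAt.fun_sum fun j _ => (hz t j).const_mul (M i j)
    simpa [Matrix.mulVec, dotProduct] using h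
  have hVraw : ∀ t, HasDerivAt V (zd t ⬝ᵥ M *ᵥ z t + z t ⬝ᵥ M *ᵥ zd t) t := by
    intro t
    have h : HasDerivAt (fun s => ∑ i, z s i * (M *ᵥ z s) i)
        (∑ i, (zd t i * (M *ᵥ z t) i + z t i * (M *ᵥ zd t) i)) t :=
      HasDerivAt.fun_sum fun i _ => (hz t i).mul (hmv i t)
    simpa [hVdef, dotProduct, Finset.sum_add_distrib] using h
  have hval : ∀ t, zd t ⬝ᵥ M *ᵥ z t + z t ⬝ᵥ M *ᵥ zd t
      = -(2*κ) * (z t ⬝ᵥ (Matrix.diagonal (w t)) *ᵥ z t) := by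
    intro t
    have h1 : z t ⬝ᵥ M *ᵥ zd t = -κ * (z t ⬝ᵥ (Matrix.diagonal (w t)) *ᵥ z t) := by
      rw [hdyn t]
      rw [Matrix.mulVec_smul, dotProduct_smul]
      rw [Matrix.mulVec_mulVec, ← Matrix.mul_assoc, hMdef, hMA, Matrix.one_mul]
      simp [smul_eq_mul]
    rw [hsym (zd t) (z t), h1]
    ring
  have hV' : ∀ t, HasDerivAt V (-(2*κ) * (z t ⬝ᵥ (Matrix.diagonal (w t)) *ᵥ z t)) t := by
    intro t
    have := hVraw t
    rwa [hval t] at this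
  -- basic inequalities
  have hDz : ∀ t, Real.sin ε * (z t ⬝ᵥ z t) ≤ z t ⬝ᵥ (Matrix.diagonal (w t)) *ᵥ z t := by
    intro t
    have h1 : z t ⬝ᵥ (Matrix.diagonal (w t)) *ᵥ z t = ∑ k, z t k * (w t k * z t k) := by
      simp [dotProduct, Matrix.mulVec_diagonal]
    have h2 : (z t ⬝ᵥ z t : ℝ) = ∑ k, z t k * z t k := rfl
    rw [h1, h2, Finset.mul_sum]
    apply Finset.sum_le_sum
    intro k _
    have := (hw t k).1
    nlinarith [mul_self_nonneg (z t k)]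
  have hzznn : ∀ t, (0:ℝ) ≤ z t ⬝ᵥ z t := fun t =>
    Finset.sum_nonneg fun i _ => mul_self_nonneg (z t i)
  have hVnn : ∀ t, 0 ≤ V t := fun t =>
    le_trans (mul_nonneg hapos.le (hzznn t)) (hab (z t)).1
  set α : ℝ := 2 * κ * Real.sin ε / b with hαdef
  have hα : 0 < α := by positivity
  have hVineq : ∀ t, -(2*κ) * (z t ⬝ᵥ (Matrix.diagonal (w t)) *ᵥ z t) ≤ -α * V t := by
    intro t
    have h1 := hDz t
    have h2 := (hab (z t)).2
    have hVt : V t = z t ⬝ᵥ M *ᵥ z t := rfl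
    rw [hVt, hαdef]
    have hb' : α * (z t ⬝ᵥ M *ᵥ z t) ≤ 2 * κ * Real.sin ε * (z t ⬝ᵥ z t) := by
      have : α * (z t ⬝ᵥ M *ᵥ z t) ≤ α * (b * (z t ⬝ᵥ z t)) := by
        apply mul_le_mul_of_nonneg_left h2 hα.le
      calc α * (z t ⬝ᵥ M *ᵥ z t) ≤ α * (b * (z t ⬝ᵥ z t)) := this
        _ = 2 * κ * Real.sin ε * (z t ⬝ᵥ z t) := by
            rw [hαdef]
            field_simp
    nlinarith
  -- Gronwall-type decay
  set g : ℝ → ℝ := fun t => V t * Real.exp (α * t) with hgdef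
  have hg : ∀ t, HasDerivAt g
      ((-(2*κ) * (z t ⬝ᵥ (Matrix.diagonal (w t)) *ᵥ z t)) * Real.exp (α * t)
        + V t * (Real.exp (α * t) * α)) t := by
    intro t
    have hexp : HasDerivAt (fun s : ℝ => Real.exp (α * s)) (Real.exp (α * t) * α) t := by
      simpa using ((hasDerivAt_id t).const_mul α).exp
    exact (hV' t).mul hexp
  have hganti : Antitone g := by
    apply antitone_of_deriv_nonpos
    · intro t
      exact (hg t).differentiableAt
    · intro t
      rw [(hg t).deriv]
      have h1 := hVineq t
      have h2 := Real.exp_pos (α * t)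
      nlinarith
  have hVdecay : ∀ t, 0 ≤ t → V t ≤ V 0 * Real.exp (-(α * t)) := by
    intro t ht
    have h1 : g t ≤ g 0 := hganti ht
    simp only [hgdef, mul_zero, Real.exp_zero, mul_one] at h1
    rw [Real.exp_neg, ← div_eq_mul_inv, le_div_iff₀ (Real.exp_pos _)]
    exact h1
  have hVtend : Tendsto V atTop (nhds 0) := by
    apply squeeze_zero' (Eventually.of_forall hVnn)
    · filter_upwards [eventually_ge_atTop (0:ℝ)] with t ht
      exact hVdecay t ht
    · have h1 : Tendsto (fun t : ℝ => α * t) atTop atTop :=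
        Tendsto.const_mul_atTop hα tendsto_id
      have h2 : Tendsto (fun t : ℝ => Real.exp (α * t)) atTop atTop :=
        Real.tendsto_exp_atTop.comp h1
      have h3 : Tendsto (fun t : ℝ => Real.exp (-(α * t))) atTop (nhds 0) := by
        simp only [Real.exp_neg]
        exact h2.inv_tendsto_atTop
      simpa using h3.const_mul (V 0)
  -- conclude coordinatewise
  rw [tendsto_pi_nhds]
  intro k
  simp only [Pi.zero_apply]
  apply squeeze_zero_norm (a := fun t => Real.sqrt (V t / a))
  · intro t
    have h1 : z t k * z t k ≤ z t ⬝ᵥ z t :=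
      Finset.single_le_sum (f := fun j => z t j * z t j)
        (fun j _ => mul_self_nonneg _) (Finset.mem_univ k)
    have h2 := (hab (z t)).1
    have h3 : (z t k) ^ 2 ≤ V t / a := by
      rw [le_div_iff₀ hapos]
      nlinarith
    rw [Real.norm_eq_abs]
    exact (Real.abs_le_sqrt h3)
  · have := (hVtend.div_const a).sqrt
    simpa using this
end
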